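/- Let V be a finite-dimensional vector space, G a group acting on V by linear automorphisms (hence acting on the lattice of subspaces preserving dimension), and let φ, ψ : Grass(V) → ℝ be G-invariant functions with φ ≥ 0, φ(0)=0, both non-decreasing for inclusion, φ submodular and ψ supermodular. Then the supremum of ψ(x)/φ(x) over subspaces x (with the conventions as in the submodularity lemma) is attained at a G-invariant subspace. -/

import Mathlib

open Module

section Aux
variable {K V : Type*} [Field K] [AddCommGroup V] [Module K V] [FiniteDimensional K V]

/-- A nonpositive supermodular function with supremum `0` over a join-closed
family of subspaces attains the value `0`. -/
lemma key_supermodular_attains (F : Submodule K V → ℝ)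
    (hsuper : ∀ x y, F x + F y ≤ F (x ⊔ y) + F (x ⊓ y))
    (hF0 : ∀ x, F x ≤ 0)
    (B : Set (Submodule K V))
    (hBjoin : ∀ x ∈ B, ∀ y ∈ B, x ⊔ y ∈ B)
    (hsup : ∀ ε : ℝ, 0 < ε → ∃ x ∈ B, -ε ≤ F x) :
    ∃ x ∈ B, F x = 0 := by
  by_contra hc
  push_neg at hc
  have hneg : ∀ x ∈ B, F x < 0 := fun x hx => lt_of_le_of_ne (hF0 x) (hc x hx)
  set d : ℝ → ℕ := fun ε =>
    sSup ((fun x : Submodule K V => finrank K x) '' {x | x ∈ B ∧ -ε ≤ F x}) with hd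
  have hSne : ∀ ε : ℝ, 0 < ε → {x | x ∈ B ∧ -ε ≤ F x}.Nonempty := by
    intro ε hε
    obtain ⟨x, hx1, hx2⟩ := hsup ε hε
    exact ⟨x, hx1, hx2⟩
  have hbdd : ∀ ε : ℝ, BddAbove ((fun x : Submodule K V => finrank K x) ''
      {x | x ∈ B ∧ -ε ≤ F x}) := by
    intro ε
    refine ⟨finrank K V, ?_⟩
    rintro _ ⟨x, _, rfl⟩
    exact Submodule.finrank_le x
  have hdmem : ∀ ε : ℝ, 0 < ε → ∃ x, (x ∈ B ∧ -ε ≤ F x) ∧ finrank K x = d ε := by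
    intro ε hε
    obtain ⟨x, hx, hx2⟩ := Nat.sSup_mem ((hSne ε hε).image _) (hbdd ε)
    exact ⟨x, hx, hx2⟩
  have hdub : ∀ ε : ℝ, ∀ x, x ∈ B → -ε ≤ F x → finrank K x ≤ d ε := by
    intro ε x hx hfx
    exact le_csSup (hbdd ε) ⟨x, ⟨hx, hfx⟩, rfl⟩
  have hdmono : ∀ ε ε' : ℝ, 0 < ε → ε ≤ ε' → d ε ≤ d ε' := by
    intro ε ε' hε hεε'
    apply csSup_le ((hSne ε hε).image _)
    rintro _ ⟨x, ⟨hxB, hxF⟩, rfl⟩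
    exact hdub ε' x hxB (le_trans (neg_le_neg hεε') hxF)
  obtain ⟨ε₀, hε₀pos, hε₀⟩ : ∃ ε₀ : ℝ, 0 < ε₀ ∧ d ε₀ = sInf (d '' Set.Ioi (0:ℝ)) := by
    obtain ⟨ε₀, h1, h2⟩ := Nat.sInf_mem (⟨d 1, 1, by norm_num, rfl⟩ :
      (d '' Set.Ioi (0:ℝ)).Nonempty)
    exact ⟨ε₀, h1, h2⟩
  have hstab : ∀ ε : ℝ, 0 < ε → ε ≤ ε₀ → d ε = d ε₀ := by
    intro ε h1 h2
    refine le_antisymm (hdmono ε ε₀ h1 h2) ?_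
    rw [hε₀]
    exact Nat.sInf_le ⟨ε, h1, rfl⟩
  obtain ⟨x, ⟨hxB, hxF⟩, hxd⟩ := hdmem (ε₀/2) (by positivity)
  have hFx : F x < 0 := hneg x hxB
  set ε₂ := min (ε₀/2) (-F x / 2) with hε₂
  have hε₂pos : 0 < ε₂ := lt_min (by positivity) (by linarith)
  obtain ⟨y, ⟨hyB, hyF⟩, hyd⟩ := hdmem ε₂ hε₂pos
  have hxy : x ≠ y := by
    intro h
    rw [← h] at hyF
    have h2 : ε₂ ≤ -F x / 2 := min_le_right _ _
    linarith
  have hε₂le : ε₂ ≤ ε₀ / 2 := min_le_left _ _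
  have hdy : finrank K y = finrank K x := by
    rw [hyd, hxd, hstab ε₂ hε₂pos (by linarith), hstab (ε₀/2) (by positivity) (by linarith)]
  have hjB : x ⊔ y ∈ B := hBjoin x hxB y hyB
  have hFj : -ε₀ ≤ F (x ⊔ y) := by
    have h1 := hsuper x y
    have h2 := hF0 (x ⊓ y)
    linarith
  have hj_le : finrank K ↥(x ⊔ y) ≤ d ε₀ := hdub ε₀ _ hjB hFj
  have hdeq : d (ε₀/2) = d ε₀ := hstab _ (by positivity) (by linarith)
  have hxj : x = x ⊔ y :=
    Submodule.eq_of_le_of_finrank_le le_sup_left (by rw [hxd, hdeq]; exact hj_le)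
  have hyx : y ≤ x := hxj ▸ le_sup_right
  have : y = x := Submodule.eq_of_le_of_finrank_le hyx (le_of_eq hdy.symm)
  exact hxy this.symm

/-- A nonempty join-closed family of subspaces has a top element. -/
lemma exists_top_elem (C : Set (Submodule K V)) (hne : C.Nonempty)
    (hjoin : ∀ x ∈ C, ∀ y ∈ C, x ⊔ y ∈ C) :
    ∃ x₀ ∈ C, ∀ y ∈ C, y ≤ x₀ := by
  have hDbdd : BddAbove ((fun x : Submodule K V => finrank K x) '' C) := by
    refine ⟨finrank K V, ?_⟩
    rintro _ ⟨x, _, rfl⟩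
    exact Submodule.finrank_le x
  obtain ⟨x₀, hx₀C, hx₀d⟩ := Nat.sSup_mem (hne.image _) hDbdd
  simp only at hx₀d
  refine ⟨x₀, hx₀C, fun y hy => ?_⟩
  have hj := hjoin x₀ hx₀C y hy
  have h1 : finrank K ↥(x₀ ⊔ y) ≤ finrank K ↥x₀ := by
    rw [hx₀d]
    exact le_csSup hDbdd ⟨_, hj, rfl⟩
  have h2 : x₀ = x₀ ⊔ y := Submodule.eq_of_le_of_finrank_le le_sup_left h1
  exact le_sup_right.trans h2.ge

lemma invariant_top_elem {G : Type*} [Group G] (ρ : G →* (V ≃ₗ[K] V))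
    (C : Set (Submodule K V))
    (hinv : ∀ (g : G), ∀ x ∈ C, x.map ((ρ g : V ≃ₗ[K] V) : V →ₗ[K] V) ∈ C)
    {x₀ : Submodule K V} (hx₀ : x₀ ∈ C) (htop : ∀ y ∈ C, y ≤ x₀) :
    ∀ g : G, x₀.map ((ρ g : V ≃ₗ[K] V) : V →ₗ[K] V) = x₀ := by
  intro g
  have h1 := hinv g x₀ hx₀
  have h2 := htop _ h1
  exact Submodule.eq_of_le_of_finrank_le h2
    (le_of_eq (LinearEquiv.finrank_map_eq (ρ g) x₀).symm)

end Aux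

/-- If moreover `φ` and `ψ` are invariant under a group `G` acting on `V` by linear
automorphisms, then the supremum of `q = ψ/φ` is attained at a `G`-invariant subspace. -/
theorem submodularity_lemma_invariant
    {K V : Type*} [Field K] [AddCommGroup V] [Module K V] [FiniteDimensional K V]
    {G : Type*} [Group G] (ρ : G →* (V ≃ₗ[K] V))
    (φ ψ : Submodule K V → ℝ)
    (hφ_nonneg : ∀ W, 0 ≤ φ W) (hφ_bot : φ ⊥ = 0)
    (hφ_mono : ∀ U W : Submodule K V, U ≤ W → φ U ≤ φ W)
    (hψ_mono : ∀ U W : Submodule K V, U ≤ W → ψ U ≤ ψ W)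
    (hφ_sub : ∀ U W : Submodule K V, φ (U ⊔ W) + φ (U ⊓ W) ≤ φ U + φ W)
    (hψ_super : ∀ U W : Submodule K V, ψ U + ψ W ≤ ψ (U ⊔ W) + ψ (U ⊓ W))
    (hφ_inv : ∀ (g : G) (W : Submodule K V), φ (W.map ((ρ g : V ≃ₗ[K] V) : V →ₗ[K] V)) = φ W)
    (hψ_inv : ∀ (g : G) (W : Submodule K V), ψ (W.map ((ρ g : V ≃ₗ[K] V) : V →ₗ[K] V)) = ψ W)
    (q : Submodule K V → EReal)
    (hq : ∀ W, q W = if ψ W = 0 then 0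
      else if φ W = 0 then (if 0 < ψ W then (⊤ : EReal) else (⊥ : EReal))
      else ((ψ W / φ W : ℝ) : EReal)) :
    ∃ x₀ : Submodule K V,
      (∀ x, q x ≤ q x₀) ∧
      (∀ g : G, x₀.map ((ρ g : V ≃ₗ[K] V) : V →ₗ[K] V) = x₀) := by
  classical
  by_cases hψtop : ψ ⊤ ≤ 0
  · -- Case 1 : `ψ ⊤ ≤ 0`, the top subspace is a maximizer.
    refine ⟨⊤, ?_, ?_⟩
    · intro x
      have hψx : ψ x ≤ ψ ⊤ := hψ_mono x ⊤ le_top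
      rw [hq x, hq ⊤]
      rcases eq_or_lt_of_le hψtop with h0 | h0
      · -- ψ ⊤ = 0
        rw [if_pos h0]
        by_cases hx0 : ψ x = 0
        · rw [if_pos hx0]
        · rw [if_neg hx0]
          have hψxneg : ψ x < 0 := lt_of_le_of_ne (by linarith) hx0
          by_cases hφx : φ x = 0
          · rw [if_pos hφx, if_neg (by linarith : ¬ 0 < ψ x)]
            exact bot_le
          · rw [if_neg hφx]
            have hφxpos : 0 < φ x := lt_of_le_of_ne (hφ_nonneg x) (Ne.symm hφx)
            have h1 : ψ x / φ x ≤ 0 := by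
              apply div_nonpos_of_nonpos_of_nonneg (le_of_lt hψxneg) (hφ_nonneg x)
            exact EReal.coe_nonpos.mpr h1
      · -- ψ ⊤ < 0
        have hψxneg : ψ x < 0 := lt_of_le_of_lt hψx h0
        rw [if_neg (ne_of_lt h0), if_neg (ne_of_lt hψxneg)]
        by_cases hφtop : φ ⊤ = 0
        · have hφx : φ x = 0 :=
            le_antisymm (hφtop ▸ hφ_mono x ⊤ le_top) (hφ_nonneg x)
          rw [if_pos hφx, if_pos hφtop, if_neg (by linarith : ¬ 0 < ψ x),
            if_neg (by linarith : ¬ 0 < ψ ⊤)]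
        · have hφtpos : 0 < φ ⊤ := lt_of_le_of_ne (hφ_nonneg ⊤) (Ne.symm hφtop)
          rw [if_neg hφtop]
          by_cases hφx : φ x = 0
          · rw [if_pos hφx, if_neg (by linarith : ¬ 0 < ψ x)]
            exact bot_le
          · have hφxpos : 0 < φ x := lt_of_le_of_ne (hφ_nonneg x) (Ne.symm hφx)
            rw [if_neg hφx, EReal.coe_le_coe_iff, div_le_div_iff₀ hφxpos hφtpos]
            nlinarith [hφ_mono x ⊤ le_top]
    · intro g
      rw [Submodule.map_top]
      exact LinearEquiv.range _
  · push_neg at hψtop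
    by_cases hA : ∃ x, φ x = 0 ∧ 0 < ψ x
    · -- Case 2a : a subspace with `φ = 0 < ψ` exists; the largest such is a maximizer.
      set C : Set (Submodule K V) := {x | φ x = 0 ∧ 0 < ψ x} with hC
      have hCjoin : ∀ x ∈ C, ∀ y ∈ C, x ⊔ y ∈ C := by
        rintro x ⟨hx1, hx2⟩ y ⟨hy1, hy2⟩
        constructor
        · have h1 := hφ_sub x y
          have h2 := hφ_nonneg (x ⊓ y)
          have h3 := hφ_nonneg (x ⊔ y)
          simp only [hx1, hy1] at h1
          linarith
        · exact lt_of_lt_of_le hx2 (hψ_mono x (x ⊔ y) le_sup_left)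
      obtain ⟨x₀, hx₀C, htop⟩ := exists_top_elem C hA hCjoin
      refine ⟨x₀, ?_, ?_⟩
      · intro x
        rw [hq x₀, if_neg (ne_of_gt hx₀C.2), if_pos hx₀C.1, if_pos hx₀C.2]
        exact le_top
      · refine invariant_top_elem ρ C ?_ hx₀C htop
        intro g x hx
        exact ⟨by rw [hφ_inv g x]; exact hx.1, by rw [hψ_inv g x]; exact hx.2⟩
    · -- Case 2b : `ψ ⊤ > 0` and `φ` is positive wherever `ψ` is.
      have hBpos : ∀ x, 0 < ψ x → 0 < φ x := by
        intro x hx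
        rcases (hφ_nonneg x).eq_or_lt with h | h
        · exact absurd ⟨h.symm, hx⟩ (fun hc => hA ⟨x, hc⟩)
        · exact h
      set B : Set (Submodule K V) := {x | 0 < ψ x} with hB
      have hTopB : (⊤ : Submodule K V) ∈ B := hψtop
      have hBjoin : ∀ x ∈ B, ∀ y ∈ B, x ⊔ y ∈ B := by
        intro x hx y _
        exact lt_of_lt_of_le hx (hψ_mono x (x ⊔ y) le_sup_left)
      -- `φ` is bounded below on `B`.
      obtain ⟨δ, hδpos, hδle⟩ : ∃ δ : ℝ, 0 < δ ∧ ∀ x ∈ B, δ ≤ φ x := by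
        by_contra hcon
        push_neg at hcon
        obtain ⟨x, hxB, hx0⟩ := key_supermodular_attains (fun x => -φ x)
          (fun x y => by have := hφ_sub x y; linarith)
          (fun x => by linarith [hφ_nonneg x])
          B hBjoin
          (fun ε hε => by
            obtain ⟨x, hxB, hxlt⟩ := hcon ε hε
            exact ⟨x, hxB, by linarith⟩)
        have hx0' : φ x = 0 := by linarith [neg_eq_zero.mp hx0]
        exact hA ⟨x, hx0', hxB⟩
      have hφtpos : 0 < φ ⊤ := lt_of_lt_of_le hδpos (hδle ⊤ hTopB)
      set R : Set ℝ := (fun x => ψ x / φ x) '' B with hR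
      have hRne : R.Nonempty := ⟨_, ⊤, hTopB, rfl⟩
      have hbddR : BddAbove R := by
        refine ⟨ψ ⊤ / δ, ?_⟩
        rintro _ ⟨x, hx, rfl⟩
        have hφxpos : 0 < φ x := hBpos x hx
        rw [div_le_div_iff₀ hφxpos hδpos]
        nlinarith [hψ_mono x ⊤ le_top, hδle x hx]
      set S : ℝ := sSup R with hS
      have hS_ub : ∀ x ∈ B, ψ x / φ x ≤ S := fun x hx => le_csSup hbddR ⟨x, hx, rfl⟩
      have hSpos : 0 < S := lt_of_lt_of_le (div_pos hψtop hφtpos) (hS_ub ⊤ hTopB)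
      -- The supremum `S` is attained on `B`.
      obtain ⟨xs, hxsB, hxs0⟩ := key_supermodular_attains (fun x => ψ x - S * φ x)
        (fun x y => by
          have h1 := hψ_super x y
          have h3 : S * (φ (x ⊔ y) + φ (x ⊓ y)) ≤ S * (φ x + φ y) :=
            mul_le_mul_of_nonneg_left (hφ_sub x y) hSpos.le
          linarith)
        (fun x => by
          by_cases hx : 0 < ψ x
          · have hφxpos : 0 < φ x := hBpos x hx
            have := hS_ub x hx
            rw [div_le_iff₀ hφxpos] at this
            linarith
          · push_neg at hx
            have : 0 ≤ S * φ x := mul_nonneg hSpos.le (hφ_nonneg x)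
            linarith)
        B hBjoin
        (fun ε hε => by
          have h1 : S - ε / φ ⊤ < S := by
            have : 0 < ε / φ ⊤ := div_pos hε hφtpos
            linarith
          obtain ⟨r, hrR, hlt⟩ := exists_lt_of_lt_csSup hRne h1
          obtain ⟨x, hxB, rfl⟩ := hrR
          refine ⟨x, hxB, ?_⟩
          have hφxpos : 0 < φ x := hBpos x hxB
          have hψeq : ψ x = (ψ x / φ x) * φ x := (div_mul_cancel₀ _ (ne_of_gt hφxpos)).symm
          have hφxle : φ x ≤ φ ⊤ := hφ_mono x ⊤ le_top
          have hr : S - ψ x / φ x < ε / φ ⊤ := by linarith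
          have heps : (ε / φ ⊤) * φ ⊤ = ε := div_mul_cancel₀ _ (ne_of_gt hφtpos)
          nlinarith [mul_lt_mul_of_pos_right hr hφxpos,
            mul_le_mul_of_nonneg_left hφxle (le_of_lt (div_pos hε hφtpos))])
      have hxs : ψ xs = S * φ xs := by
        have := hxs0
        linarith
      -- The set of maximizers.
      set M : Set (Submodule K V) := {x | 0 < ψ x ∧ ψ x = S * φ x} with hM
      have hMne : M.Nonempty := ⟨xs, hxsB, hxs⟩
      have hle_of_B : ∀ x, 0 < ψ x → ψ x ≤ S * φ x := by
        intro x hx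
        have := hS_ub x hx
        rw [div_le_iff₀ (hBpos x hx)] at this
        linarith
      have hMjoin : ∀ x ∈ M, ∀ y ∈ M, x ⊔ y ∈ M := by
        rintro x ⟨hx1, hx2⟩ y ⟨hy1, hy2⟩
        have hψj : 0 < ψ (x ⊔ y) := lt_of_lt_of_le hx1 (hψ_mono x (x ⊔ y) le_sup_left)
        refine ⟨hψj, ?_⟩
        have hj_le : ψ (x ⊔ y) ≤ S * φ (x ⊔ y) := hle_of_B _ hψj
        have hm_le : ψ (x ⊓ y) ≤ S * φ (x ⊓ y) := by
          by_cases hm : 0 < ψ (x ⊓ y)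
          · exact hle_of_B _ hm
          · push_neg at hm
            exact le_trans hm (mul_nonneg hSpos.le (hφ_nonneg _))
        have h1 := hψ_super x y
        have h2 : S * (φ (x ⊔ y) + φ (x ⊓ y)) ≤ S * (φ x + φ y) :=
          mul_le_mul_of_nonneg_left (hφ_sub x y) hSpos.le
        nlinarith
      obtain ⟨x₀, hx₀M, htop⟩ := exists_top_elem M hMne hMjoin
      have hφx₀pos : 0 < φ x₀ := hBpos x₀ hx₀M.1
      have hqx₀ : q x₀ = ((S : ℝ) : EReal) := by
        rw [hq x₀, if_neg (ne_of_gt hx₀M.1), if_neg (ne_of_gt hφx₀pos)]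
        congr 1
        rw [hx₀M.2]
        field_simp
      refine ⟨x₀, ?_, ?_⟩
      · intro x
        rw [hqx₀, hq x]
        by_cases hx0 : ψ x = 0
        · rw [if_pos hx0]
          exact EReal.coe_nonneg.mpr hSpos.le
        · rw [if_neg hx0]
          by_cases hφx : φ x = 0
          · rw [if_pos hφx, if_neg (fun hc => hA ⟨x, hφx, hc⟩)]
            exact bot_le
          · rw [if_neg hφx, EReal.coe_le_coe_iff]
            have hφxpos : 0 < φ x := lt_of_le_of_ne (hφ_nonneg x) (Ne.symm hφx)
            by_cases hψx : 0 < ψ x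
            · exact hS_ub x hψx
            · push_neg at hψx
              exact le_trans (div_nonpos_of_nonpos_of_nonneg hψx (hφ_nonneg x)) hSpos.le
      · refine invariant_top_elem ρ M ?_ hx₀M htop
        intro g x hx
        exact ⟨by rw [hψ_inv g x]; exact hx.1,
          by rw [hψ_inv g x, hφ_inv g x]; exact hx.2⟩
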